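/- arXiv:2005.08731 — 3 statements merged into one kernel-verified Lean document; each statement's English description precedes it below -/
import Mathlib

section
/- Let G be a finite directed acyclic graph containing three distinguished vertices b, g, v with edges v→g, v→b and b→g. Let G₁ be G with the edge b→g removed, and G₂ be G with the edges v→b and b→g removed and the edge g→b added. Then the number of topological orderings satisfies topo(G) = topo(G₁) − topo(G₂). -/
/-- The number of topological orderings of a digraph with edge relation `E` on the
finite vertex type `V`: bijections `f : V ≃ Fin |V|` with `f u > f v` for each
edge `u → v`. -/
noncomputable def topo {V : Type*} [Fintype V] (E : V → V → Prop) : ℕ :=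
  Nat.card {f : V ≃ Fin (Fintype.card V) // ∀ u v, E u v → f v < f u}

/-- Lemma `lemmaTrickOne`: if a finite DAG `G` has three distinct vertices `b, g, v`
with edges `v→g`, `v→b`, `b→g`, and `G₁` is `G` without the edge `b→g`, while `G₂`
is `G` without `v→b` and `b→g` but with `g→b` instead, then
`topo(G) = topo(G₁) − topo(G₂)`. -/
theorem topo_trick {V : Type*} [Fintype V] [DecidableEq V] (E : V → V → Prop)
    (hacyc : ∀ x : V, ¬ Relation.TransGen E x x)
    (b g v : V) (hbg : b ≠ g) (hbv : b ≠ v) (hgv : g ≠ v)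
    (hvg : E v g) (hvb : E v b) (hEbg : E b g) :
    (topo E : ℤ) =
      topo (fun x y => E x y ∧ ¬(x = b ∧ y = g)) -
        topo (fun x y =>
          (E x y ∧ ¬(x = b ∧ y = g) ∧ ¬(x = v ∧ y = b)) ∨ (x = g ∧ y = b)) := by
  classical
  set n := Fintype.card V with hn
  set P : (V ≃ Fin n) → Prop := fun f => ∀ u w, E u w → f w < f u with hP
  set Q : (V ≃ Fin n) → Prop := fun f =>
    ∀ u w, ((E u w ∧ ¬(u = b ∧ w = g) ∧ ¬(u = v ∧ w = b)) ∨ (u = g ∧ w = b)) → f w < f u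
    with hQ
  have h1 : ∀ f : V ≃ Fin n,
      (∀ u w, (E u w ∧ ¬(u = b ∧ w = g)) → f w < f u) ↔ (P f ∨ Q f) := by
    intro f
    constructor
    · intro h
      have hne : f g ≠ f b := fun hh => hbg (f.injective hh.symm)
      rcases lt_or_gt_of_ne hne with hlt | hgt
      · left; intro u w huw
        by_cases hc : u = b ∧ w = g
        · obtain ⟨rfl, rfl⟩ := hc; exact hlt
        · exact h u w ⟨huw, hc⟩
      · right; intro u w huw
        rcases huw with ⟨he, hc, _⟩ | ⟨rfl, rfl⟩
        · exact h u w ⟨he, hc⟩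
        · exact hgt
    · rintro (h | h) u w ⟨he, hc⟩
      · exact h u w he
      · by_cases hv : u = v ∧ w = b
        · have hb : f b < f g := h g b (Or.inr ⟨rfl, rfl⟩)
          have hg : f g < f v :=
            h v g (Or.inl ⟨hvg, fun hh => hbv hh.1.symm, fun hh => hbg hh.2.symm⟩)
          rw [hv.1, hv.2]
          exact hb.trans hg
        · exact h u w (Or.inl ⟨he, hc, hv⟩)
  have hdisj : Disjoint P Q := by
    rw [Pi.disjoint_iff]
    intro f
    rw [Prop.disjoint_iff]
    rintro ⟨h1, h2⟩
    exact absurd (h1 b g hEbg) (not_lt.2 (h2 g b (Or.inr ⟨rfl, rfl⟩)).le)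
  have key : topo (fun x y => E x y ∧ ¬(x = b ∧ y = g)) =
      topo E + topo (fun x y =>
        (E x y ∧ ¬(x = b ∧ y = g) ∧ ¬(x = v ∧ y = b)) ∨ (x = g ∧ y = b)) := by
    unfold topo
    rw [← hn]
    rw [Nat.card_congr (Equiv.subtypeEquivRight h1)]
    rw [Nat.card_congr (subtypeOrEquiv P Q hdisj)]
    exact Nat.card_sum
  rw [key]
  push_cast
  ring
end

section
/- Let α₁,…,αₙ ≥ 0 be integers, m = Σαᵢ, and x₁,…,xₙ elements of a commutative ring. Form the m×m block matrix whose block for index i is the αᵢ×m matrix with (r,s)-entry C(s−1, r−1)·xᵢ^{s−r} (the (r−1)-th derivative divided by (r−1)! of x^{s−1} evaluated at xᵢ), rows r = 1,…,αᵢ and columns s = 1,…,m. Then the determinant of this matrix equals ∏_{i<j} (xⱼ − xᵢ)^{αᵢ·αⱼ}. -/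
namespace CVD

variable {R : Type*} [CommRing R] {S : Type*} [CommRing S]

/-- Complete homogeneous polynomial of degree `d` in `y 0, …, y (k-1)`. -/
def H (y : ℕ → R) : ℕ → ℕ → R
  | 0, _ => 1
  | _ + 1, 0 => 0
  | d + 1, k + 1 => H y (d + 1) k + y k * H y d (k + 1)

lemma H_zero (y : ℕ → R) (k : ℕ) : H y 0 k = 1 := by simp [H]

lemma H_succ_zero (y : ℕ → R) (d : ℕ) : H y (d + 1) 0 = 0 := by simp [H]

lemma H_succ_succ (y : ℕ → R) (d k : ℕ) :
    H y (d + 1) (k + 1) = H y (d + 1) k + y k * H y d (k + 1) := by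
  rw [H]

lemma map_H (f : R →+* S) (y : ℕ → R) : ∀ d k, f (H y d k) = H (fun l => f (y l)) d k := by
  intro d
  induction d with
  | zero => intro k; simp [H_zero]
  | succ d ihd =>
    intro k
    induction k with
    | zero => simp [H_succ_zero]
    | succ k ihk => rw [H_succ_succ, H_succ_succ, map_add, map_mul, ihd, ihk]

lemma H_const (c : R) : ∀ d k, H (fun _ => c) d k = ((d + k - 1).choose d : ℕ) * c ^ d := by
  intro d
  induction d with
  | zero => intro k; simp [H_zero]
  | succ d ihd =>
    intro k
    induction k with
    | zero =>
      rw [H_succ_zero]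
      rw [show d + 1 + 0 - 1 = d by omega, Nat.choose_eq_zero_of_lt (by omega)]
      simp
    | succ k ihk =>
      rw [H_succ_succ, ihd, ihk]
      rw [show d + 1 + (k + 1) - 1 = d + k + 1 by omega, show d + 1 + k - 1 = d + k by omega,
        show d + (k + 1) - 1 = d + k by omega, Nat.choose_succ_succ (d + k) d]
      push_cast
      ring

/-- Divided difference of `X ^ s` at the nodes `y 0, …, y k`. -/
def G (y : ℕ → R) (s k : ℕ) : R := if k ≤ s then H y (s - k) (k + 1) else 0

lemma map_G (f : R →+* S) (y : ℕ → R) (s k : ℕ) :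
    f (G y s k) = G (fun l => f (y l)) s k := by
  unfold G; split <;> simp [map_H]

lemma G_const (c : R) (s k : ℕ) : G (fun _ => c) s k = (s.choose k : ℕ) * c ^ (s - k) := by
  unfold G
  by_cases h : k ≤ s
  · rw [if_pos h, H_const, show s - k + (k + 1) - 1 = s by omega, Nat.choose_symm h]
  · rw [if_neg h, Nat.choose_eq_zero_of_lt (by omega)]
    simp

lemma G_succ (y : ℕ → R) (s k : ℕ) :
    G y (s + 1) k = (if k ≤ s + 1 then H y (s + 1 - k) k else 0) + y k * G y s k := by
  unfold G
  rcases lt_trichotomy k (s + 1) with h | h | h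
  · rw [if_pos (by omega), if_pos (by omega), if_pos (by omega),
      show s + 1 - k = (s - k) + 1 by omega, H_succ_succ]
  · subst h
    rw [if_pos le_rfl, if_pos le_rfl, if_neg (by omega), Nat.sub_self, H_zero, H_zero]
    ring
  · rw [if_neg (by omega), if_neg (by omega), if_neg (by omega)]
    ring

/-- Newton's interpolation identity for `X ^ s` at the nodes `y 0, …, y j`. -/
lemma newton (y : ℕ → R) (s j : ℕ) :
    y j ^ s = ∑ k ∈ Finset.range (j + 1),
      (∏ l ∈ Finset.range k, (y j - y l)) * G y s k := by
  induction s with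
  | zero =>
    rw [pow_zero, Finset.sum_eq_single 0]
    · simp [G, H_zero]
    · intro k _ hk
      rw [G, if_neg (by omega), mul_zero]
    · intro h; exact absurd (Finset.mem_range.mpr (by omega)) h
  | succ s ih =>
    have step : ∑ k ∈ Finset.range (j + 1),
        (∏ l ∈ Finset.range k, (y j - y l)) * G y (s + 1) k
        = (∑ k ∈ Finset.range (j + 1),
            (∏ l ∈ Finset.range k, (y j - y l)) * (if k ≤ s + 1 then H y (s + 1 - k) k else 0))
          + ∑ k ∈ Finset.range (j + 1),
            (∏ l ∈ Finset.range k, (y j - y l)) * (y k * G y s k) := by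
      rw [← Finset.sum_add_distrib]
      refine Finset.sum_congr rfl fun k _ => ?_
      rw [G_succ]; ring
    have first : ∑ k ∈ Finset.range (j + 1),
        (∏ l ∈ Finset.range k, (y j - y l)) * (if k ≤ s + 1 then H y (s + 1 - k) k else 0)
        = ∑ k ∈ Finset.range j,
            (∏ l ∈ Finset.range k, (y j - y l)) * (y j - y k) * G y s k := by
      rw [Finset.sum_range_succ']
      simp only [Nat.zero_le, if_true, Nat.sub_zero, H_succ_zero, mul_zero, add_zero]
      refine Finset.sum_congr rfl fun k _ => ?_
      rw [Finset.prod_range_succ]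
      congr 1
      unfold G
      rw [show s + 1 - (k + 1) = s - k by omega]
      by_cases h : k ≤ s
      · rw [if_pos (by omega), if_pos h]
      · rw [if_neg (by omega), if_neg h]
    rw [step, first]
    have ext1 : ∑ k ∈ Finset.range j,
        (∏ l ∈ Finset.range k, (y j - y l)) * (y j - y k) * G y s k
        = ∑ k ∈ Finset.range (j + 1),
            (∏ l ∈ Finset.range k, (y j - y l)) * (y j - y k) * G y s k := by
      rw [Finset.sum_range_succ, sub_self, mul_zero, zero_mul, add_zero]
    rw [ext1, ← Finset.sum_add_distrib]
    have : ∀ k, (∏ l ∈ Finset.range k, (y j - y l)) * (y j - y k) * G y s k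
        + (∏ l ∈ Finset.range k, (y j - y l)) * (y k * G y s k)
        = y j * ((∏ l ∈ Finset.range k, (y j - y l)) * G y s k) := fun k => by ring
    simp_rw [this]
    rw [← Finset.mul_sum, ← ih, pow_succ]
    ring

section SigmaHelpers

variable {n : ℕ} {α : Fin n → ℕ}

lemma sig_ext {p q : Σ i : Fin n, Fin (α i)} (h1 : (p.1 : ℕ) = (q.1 : ℕ))
    (h2 : (p.2 : ℕ) = (q.2 : ℕ)) : p = q := by
  obtain ⟨i, a⟩ := p
  obtain ⟨j, b⟩ := q
  simp only at h1 h2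
  have hij : i = j := Fin.ext h1
  subst hij
  exact congrArg (Sigma.mk i) (Fin.ext h2)

lemma prod_block {M : Type*} [CommMonoid M] (i : Fin n) (j : ℕ) (hj : j ≤ α i) (g : ℕ → M) :
    (∏ p : Σ i : Fin n, Fin (α i),
        if (p.1 : ℕ) = (i : ℕ) ∧ (p.2 : ℕ) < j then g (p.2 : ℕ) else 1)
      = ∏ l ∈ Finset.range j, g l := by
  classical
  rw [← Finset.univ_sigma_univ, Finset.prod_sigma]
  rw [Finset.prod_eq_single_of_mem i (Finset.mem_univ i) (fun i' _ hne =>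
    Finset.prod_eq_one fun b _ => if_neg (by rintro ⟨h, -⟩; exact hne (Fin.ext h)))]
  have h1 : ∀ b : Fin (α i), (if ((i : ℕ) = (i : ℕ) ∧ (b : ℕ) < j) then g (b : ℕ) else 1)
      = (fun k => if k < j then g k else 1) (b : ℕ) := fun b => by simp
  rw [Finset.prod_congr rfl fun b _ => h1 b,
    Fin.prod_univ_eq_prod_range (fun k => if k < j then g k else 1) (α i)]
  rw [← Finset.prod_subset (Finset.range_subset_range.mpr hj)
    (fun k _ hk => if_neg (by simpa using hk))]
  exact Finset.prod_congr rfl fun k hk => if_pos (Finset.mem_range.mp hk)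

lemma sum_block {M : Type*} [AddCommMonoid M] (i : Fin n) (j : ℕ) (hj : j < α i) (g : ℕ → M) :
    (∑ p : Σ i : Fin n, Fin (α i),
        if (p.1 : ℕ) = (i : ℕ) ∧ (p.2 : ℕ) ≤ j then g (p.2 : ℕ) else 0)
      = ∑ l ∈ Finset.range (j + 1), g l := by
  classical
  rw [← Finset.univ_sigma_univ, Finset.sum_sigma]
  rw [Finset.sum_eq_single_of_mem i (Finset.mem_univ i) (fun i' _ hne =>
    Finset.sum_eq_zero fun b _ => if_neg (by rintro ⟨h, -⟩; exact hne (Fin.ext h)))]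
  have h1 : ∀ b : Fin (α i), (if ((i : ℕ) = (i : ℕ) ∧ (b : ℕ) ≤ j) then g (b : ℕ) else 0)
      = (fun k => if k ≤ j then g k else 0) (b : ℕ) := fun b => by simp
  rw [Finset.sum_congr rfl fun b _ => h1 b,
    Fin.sum_univ_eq_sum_range (fun k => if k ≤ j then g k else 0) (α i)]
  rw [← Finset.sum_subset (Finset.range_subset_range.mpr (by omega : j + 1 ≤ α i))
    (fun k _ hk => if_neg (by simp at hk; omega))]
  exact Finset.sum_congr rfl fun k hk => if_pos (by simpa [Nat.lt_succ_iff] using hk)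

end SigmaHelpers

section Generic

variable {n : ℕ} (α : Fin n → ℕ)

/-- generic nodes `xᵢ + tᵢⱼ` in a polynomial ring over `ℤ` -/
noncomputable def Ygen : (Σ i : Fin n, Fin (α i)) → MvPolynomial (Fin n ⊕ (Σ i : Fin n, Fin (α i))) ℤ :=
  fun p => MvPolynomial.X (Sum.inl p.1) + MvPolynomial.X (Sum.inr p)

noncomputable def yb (i : Fin n) (l : ℕ) : MvPolynomial (Fin n ⊕ (Σ i : Fin n, Fin (α i))) ℤ :=
  if h : l < α i then Ygen α ⟨i, ⟨l, h⟩⟩ else MvPolynomial.X (Sum.inl i)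

lemma yb_of_lt {i : Fin n} {l : ℕ} (h : l < α i) : yb α i l = Ygen α ⟨i, ⟨l, h⟩⟩ := dif_pos h

lemma yb_self (p : Σ i : Fin n, Fin (α i)) : yb α p.1 (p.2 : ℕ) = Ygen α p := by
  rw [yb_of_lt α p.2.isLt]

lemma Ygen_sub_ne_zero {p q : Σ i : Fin n, Fin (α i)} (h : p ≠ q) :
    Ygen α p - Ygen α q ≠ 0 := by
  intro hz
  have h1 := congrArg (MvPolynomial.eval (fun w => if w = Sum.inr p then (1 : ℤ) else 0)) hz
  simp only [Ygen, map_sub, map_add, MvPolynomial.eval_X, map_zero] at h1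
  rw [if_neg (fun hh => h (Sum.inr_injective hh).symm)] at h1
  simp at h1

theorem det_generic {m : ℕ} (e : (Σ i : Fin n, Fin (α i)) ≃ Fin m)
    (he : ∀ a b : Σ i : Fin n, Fin (α i),
      ((a.1 : ℕ) < b.1 ∨ ((a.1 : ℕ) = b.1 ∧ (a.2 : ℕ) < (b.2 : ℕ))) → e a < e b) :
    (Matrix.of fun r s : Fin m =>
        G (yb α (e.symm r).1) (s : ℕ) ((e.symm r).2 : ℕ)).det
      = ∏ p : Σ i : Fin n, Fin (α i), ∏ q : Σ i : Fin n, Fin (α i),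
          if (p.1 : ℕ) < (q.1 : ℕ) then (Ygen α q - Ygen α p) else 1 := by
  classical
  have lex_iff : ∀ p q : Σ i : Fin n, Fin (α i),
      e p < e q ↔ ((p.1 : ℕ) < q.1 ∨ ((p.1 : ℕ) = q.1 ∧ (p.2 : ℕ) < (q.2 : ℕ))) := by
    intro p q
    refine ⟨fun hlt => ?_, he p q⟩
    by_contra hc
    push_neg at hc
    obtain ⟨hc1, hc2⟩ := hc
    rcases Nat.lt_trichotomy (p.1 : ℕ) (q.1 : ℕ) with h | h | h
    · omega
    · have h2 := hc2 h
      by_cases h3 : (p.2 : ℕ) = (q.2 : ℕ)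
      · rw [sig_ext h h3] at hlt
        exact lt_irrefl _ hlt
      · exact absurd hlt (lt_asymm (he q p (Or.inr ⟨h.symm, by omega⟩)))
    · exact absurd hlt (lt_asymm (he q p (Or.inl h)))
  set Mx : Matrix (Fin m) (Fin m) (MvPolynomial (Fin n ⊕ (Σ i : Fin n, Fin (α i))) ℤ) :=
    Matrix.of fun r s => G (yb α (e.symm r).1) (s : ℕ) ((e.symm r).2 : ℕ) with hMx
  set L : Matrix (Fin m) (Fin m) (MvPolynomial (Fin n ⊕ (Σ i : Fin n, Fin (α i))) ℤ) :=
    Matrix.of fun r t =>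
      if ((e.symm t).1 : ℕ) = ((e.symm r).1 : ℕ) ∧ ((e.symm t).2 : ℕ) ≤ ((e.symm r).2 : ℕ)
      then ∏ l ∈ Finset.range ((e.symm t).2 : ℕ),
        (yb α (e.symm r).1 ((e.symm r).2 : ℕ) - yb α (e.symm r).1 l)
      else 0 with hL
  have hMxee : ∀ (p : Σ i : Fin n, Fin (α i)) (s : Fin m),
      Mx (e p) s = G (yb α p.1) (s : ℕ) ((p.2 : ℕ)) := fun p s =>
    congrArg (fun z : Σ i : Fin n, Fin (α i) => G (yb α z.1) (s : ℕ) ((z.2 : ℕ)))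
      (Equiv.symm_apply_apply e p)
  have hLee : ∀ p q : Σ i : Fin n, Fin (α i),
      L (e p) (e q) = if ((q.1 : ℕ) = (p.1 : ℕ) ∧ (q.2 : ℕ) ≤ (p.2 : ℕ))
        then ∏ l ∈ Finset.range (q.2 : ℕ),
          (yb α p.1 ((p.2 : ℕ)) - yb α p.1 l)
        else 0 := fun p q =>
    congrArg₂ (fun z w : Σ i : Fin n, Fin (α i) =>
        if ((w.1 : ℕ) = (z.1 : ℕ) ∧ (w.2 : ℕ) ≤ (z.2 : ℕ))
        then ∏ l ∈ Finset.range (w.2 : ℕ), (yb α z.1 ((z.2 : ℕ)) - yb α z.1 l) else 0)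
      (Equiv.symm_apply_apply e p) (Equiv.symm_apply_apply e q)
  have hfact : Matrix.vandermonde (fun r => Ygen α (e.symm r)) = L * Mx := by
    apply Matrix.ext
    intro r s
    obtain ⟨p, rfl⟩ : ∃ p, e p = r := ⟨e.symm r, e.apply_symm_apply r⟩
    rw [Matrix.vandermonde_apply, Equiv.symm_apply_apply, Matrix.mul_apply]
    rw [← Equiv.sum_comp e (fun t => L (e p) t * Mx t s)]
    have hsummand : ∀ q : Σ i : Fin n, Fin (α i),
        L (e p) (e q) * Mx (e q) s
        = (if ((q.1 : ℕ) = (p.1 : ℕ) ∧ (q.2 : ℕ) ≤ (p.2 : ℕ))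
          then (fun k => (∏ l ∈ Finset.range k, (yb α p.1 ((p.2 : ℕ)) - yb α p.1 l))
            * G (yb α p.1) (s : ℕ) k) (q.2 : ℕ) else 0) := by
      intro q
      rw [hLee p q, hMxee q s]
      by_cases hg : ((q.1 : ℕ) = (p.1 : ℕ) ∧ (q.2 : ℕ) ≤ (p.2 : ℕ))
      · rw [if_pos hg, if_pos hg]
        have hq1 : q.1 = p.1 := Fin.ext hg.1
        rw [show yb α q.1 = yb α p.1 from by rw [hq1]]
      · rw [if_neg hg, if_neg hg, zero_mul]
    rw [Finset.sum_congr rfl fun q _ => hsummand q]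
    rw [sum_block p.1 ((p.2 : ℕ)) p.2.isLt
      (fun k => (∏ l ∈ Finset.range k, (yb α p.1 ((p.2 : ℕ)) - yb α p.1 l))
        * G (yb α p.1) (s : ℕ) k)]
    rw [← yb_self α p]
    exact newton (yb α p.1) (s : ℕ) ((p.2 : ℕ))
  have htri : L.BlockTriangular OrderDual.toDual := by
    intro r t hrt
    obtain ⟨p, rfl⟩ : ∃ p, e p = r := ⟨e.symm r, e.apply_symm_apply r⟩
    obtain ⟨q, rfl⟩ : ∃ q, e q = t := ⟨e.symm t, e.apply_symm_apply t⟩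
    have hlt : e p < e q := hrt
    have hlex := (lex_iff p q).mp hlt
    rw [hLee p q, if_neg]
    rintro ⟨h1, h2⟩
    rcases hlex with h | ⟨h, h'⟩ <;> omega
  have hdiag : (∏ p : Σ i : Fin n, Fin (α i), ∏ q : Σ i : Fin n, Fin (α i),
        if ((p.1 : ℕ) = (q.1 : ℕ) ∧ (p.2 : ℕ) < (q.2 : ℕ)) then (Ygen α q - Ygen α p) else 1)
      = ∏ p : Σ i : Fin n, Fin (α i), ∏ l ∈ Finset.range (p.2 : ℕ),
          (yb α p.1 ((p.2 : ℕ)) - yb α p.1 l) := by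
    rw [Finset.prod_comm]
    refine Finset.prod_congr rfl fun q _ => ?_
    have hfac : ∀ p : Σ i : Fin n, Fin (α i),
        (if ((p.1 : ℕ) = (q.1 : ℕ) ∧ (p.2 : ℕ) < (q.2 : ℕ)) then (Ygen α q - Ygen α p) else 1)
        = (if ((p.1 : ℕ) = (q.1 : ℕ) ∧ (p.2 : ℕ) < (q.2 : ℕ))
          then (fun l => yb α q.1 ((q.2 : ℕ)) - yb α q.1 l) (p.2 : ℕ) else 1) := by
      intro p
      by_cases hg : ((p.1 : ℕ) = (q.1 : ℕ) ∧ (p.2 : ℕ) < (q.2 : ℕ))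
      · rw [if_pos hg, if_pos hg]
        have h1 : (p.2 : ℕ) < α q.1 := lt_trans hg.2 q.2.isLt
        have hpc : Ygen α p = yb α q.1 ((p.2 : ℕ)) := by
          rw [yb_of_lt α h1]
          exact congrArg (Ygen α) (sig_ext hg.1 rfl)
        show Ygen α q - Ygen α p = yb α q.1 ((q.2 : ℕ)) - yb α q.1 ((p.2 : ℕ))
        rw [yb_self α q, ← hpc]
      · rw [if_neg hg, if_neg hg]
    rw [Finset.prod_congr rfl fun p _ => hfac p,
      prod_block q.1 ((q.2 : ℕ)) (le_of_lt q.2.isLt)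
        (fun l => yb α q.1 ((q.2 : ℕ)) - yb α q.1 l)]
  have hdetL : L.det = ∏ p : Σ i : Fin n, Fin (α i), ∏ l ∈ Finset.range (p.2 : ℕ),
      (yb α p.1 ((p.2 : ℕ)) - yb α p.1 l) := by
    rw [Matrix.det_of_lowerTriangular L htri]
    rw [← Equiv.prod_comp e (fun r => L r r)]
    refine Finset.prod_congr rfl fun p _ => ?_
    rw [hLee p p, if_pos ⟨rfl, le_rfl⟩]
  have hA0 : (∏ p : Σ i : Fin n, Fin (α i), ∏ l ∈ Finset.range (p.2 : ℕ),
      (yb α p.1 ((p.2 : ℕ)) - yb α p.1 l)) ≠ 0 := by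
    rw [Finset.prod_ne_zero_iff]
    intro p _
    rw [Finset.prod_ne_zero_iff]
    intro l hl
    have hlp : l < (p.2 : ℕ) := Finset.mem_range.mp hl
    have hl2 : l < α p.1 := lt_trans hlp p.2.isLt
    rw [yb_self, yb_of_lt α hl2]
    refine Ygen_sub_ne_zero α fun hEq => ?_
    have := congrArg (fun z : Σ i : Fin n, Fin (α i) => (z.2 : ℕ)) hEq
    simp only at this
    omega
  have hdetV : (Matrix.vandermonde fun r => Ygen α (e.symm r)).det
      = (∏ p : Σ i : Fin n, Fin (α i), ∏ q : Σ i : Fin n, Fin (α i),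
          if ((p.1 : ℕ) = (q.1 : ℕ) ∧ (p.2 : ℕ) < (q.2 : ℕ)) then (Ygen α q - Ygen α p) else 1)
        * ∏ p : Σ i : Fin n, Fin (α i), ∏ q : Σ i : Fin n, Fin (α i),
            if (p.1 : ℕ) < (q.1 : ℕ) then (Ygen α q - Ygen α p) else 1 := by
    rw [Matrix.det_vandermonde]
    have step1 : ∀ r : Fin m, (∏ t ∈ Finset.Ioi r, (Ygen α (e.symm t) - Ygen α (e.symm r)))
        = ∏ t : Fin m, if r < t then (Ygen α (e.symm t) - Ygen α (e.symm r)) else 1 := by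
      intro r
      rw [← Finset.prod_filter]
      congr 1
      ext t
      simp
    rw [Finset.prod_congr rfl fun r _ => step1 r]
    rw [← Equiv.prod_comp e
      (fun r => ∏ t : Fin m, if r < t then (Ygen α (e.symm t) - Ygen α (e.symm r)) else 1)]
    rw [Finset.prod_congr rfl fun p (_ : p ∈ Finset.univ) => (Equiv.prod_comp e
      (fun t => if e p < t then (Ygen α (e.symm t) - Ygen α (e.symm (e p))) else 1)).symm]
    have hfix : ∀ p q : Σ i : Fin n, Fin (α i),
        (if e p < e q then (Ygen α (e.symm (e q)) - Ygen α (e.symm (e p))) else 1)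
        = (if ((p.1 : ℕ) = (q.1 : ℕ) ∧ (p.2 : ℕ) < (q.2 : ℕ)) then (Ygen α q - Ygen α p) else 1)
          * (if (p.1 : ℕ) < (q.1 : ℕ) then (Ygen α q - Ygen α p) else 1) := by
      intro p q
      rw [Equiv.symm_apply_apply, Equiv.symm_apply_apply,
        if_congr (lex_iff p q) rfl rfl]
      split_ifs <;> first | (exfalso; omega) | ring
    rw [Finset.prod_congr rfl fun p (_ : p ∈ Finset.univ) =>
      Finset.prod_congr rfl fun q (_ : q ∈ Finset.univ) => hfix p q]
    rw [Finset.prod_congr rfl fun p (_ : p ∈ Finset.univ) => Finset.prod_mul_distrib,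
      Finset.prod_mul_distrib]
  have hmain : L.det * Mx.det = L.det *
      ∏ p : Σ i : Fin n, Fin (α i), ∏ q : Σ i : Fin n, Fin (α i),
        if (p.1 : ℕ) < (q.1 : ℕ) then (Ygen α q - Ygen α p) else 1 := by
    rw [← Matrix.det_mul, ← hfact, hdetV, hdetL, hdiag]
  exact mul_left_cancel₀ (by rw [hdetL]; exact hA0) hmain

end Generic

end CVD

/-- The generalised (confluent) Vandermonde determinant: the `m×m` matrix (rows ordered
block by block via any equivalence `e` respecting the lexicographic block order) whose
block for `xᵢ` has rows the divided derivatives of `(1, x, x², …, x^{m−1})` at `xᵢ`,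
i.e. `(r,s)`-entry `C(s−1, r−1)·xᵢ^{s−r}` (1-based; zero for `s < r`), has determinant
`∏_{i<j} (xⱼ − xᵢ)^{αᵢαⱼ}`. -/
theorem confluent_vandermonde {R : Type*} [CommRing R] {n : ℕ} (α : Fin n → ℕ)
    (m : ℕ) (hm : m = ∑ i, α i) (x : Fin n → R)
    (e : (Σ i : Fin n, Fin (α i)) ≃ Fin m)
    (he : ∀ a b : Σ i : Fin n, Fin (α i),
      ((a.1 : ℕ) < b.1 ∨ ((a.1 : ℕ) = b.1 ∧ (a.2 : ℕ) < (b.2 : ℕ))) → e a < e b) :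
    (Matrix.of fun r s : Fin m =>
        ((s : ℕ).choose ((e.symm r).2 : ℕ) : R) *
          x (e.symm r).1 ^ ((s : ℕ) - ((e.symm r).2 : ℕ))).det =
      ∏ p ∈ Finset.univ.filter (fun p : Fin n × Fin n => p.1 < p.2),
        (x p.2 - x p.1) ^ (α p.1 * α p.2) := by
  classical
  have key := CVD.det_generic α e he
  let φ : MvPolynomial (Fin n ⊕ (Σ i : Fin n, Fin (α i))) ℤ →+* R :=
    (MvPolynomial.aeval (R := ℤ) (Sum.elim x (fun _ => (0 : R)))).toRingHom
  have hφY : ∀ p : Σ i : Fin n, Fin (α i), φ (CVD.Ygen α p) = x p.1 := by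
    intro p
    simp [CVD.Ygen, φ]
  have hφyb : ∀ (i : Fin n) (l : ℕ), φ (CVD.yb α i l) = x i := by
    intro i l
    unfold CVD.yb
    split
    · exact hφY _
    · simp [φ]
  have hmap := congrArg φ key
  rw [RingHom.map_det, RingHom.mapMatrix_apply] at hmap
  have hM : (Matrix.of fun r s : Fin m =>
      CVD.G (CVD.yb α (e.symm r).1) (s : ℕ) ((e.symm r).2 : ℕ)).map φ
      = Matrix.of fun r s : Fin m =>
        ((s : ℕ).choose ((e.symm r).2 : ℕ) : R) *
          x (e.symm r).1 ^ ((s : ℕ) - ((e.symm r).2 : ℕ)) := by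
    apply Matrix.ext
    intro r s
    simp only [Matrix.map_apply, Matrix.of_apply]
    rw [CVD.map_G]
    rw [show (fun l => φ (CVD.yb α (e.symm r).1 l)) = fun _ => x (e.symm r).1 from
      funext fun l => hφyb _ l]
    rw [CVD.G_const]
  rw [hM] at hmap
  rw [hmap]
  rw [map_prod]
  rw [Finset.prod_congr rfl fun p (_ : p ∈ Finset.univ) => map_prod φ _ Finset.univ]
  have hent : ∀ p q : Σ i : Fin n, Fin (α i),
      φ (if (p.1 : ℕ) < (q.1 : ℕ) then (CVD.Ygen α q - CVD.Ygen α p) else 1)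
      = if (p.1 : ℕ) < (q.1 : ℕ) then (x q.1 - x p.1) else 1 := by
    intro p q
    rw [apply_ite φ, map_sub, map_one, hφY, hφY]
  rw [Finset.prod_congr rfl fun p (_ : p ∈ Finset.univ) =>
    Finset.prod_congr rfl fun q (_ : q ∈ Finset.univ) => hent p q]
  -- final combinatorial regrouping
  calc
    (∏ p : Σ i : Fin n, Fin (α i), ∏ q : Σ i : Fin n, Fin (α i),
        if (p.1 : ℕ) < (q.1 : ℕ) then (x q.1 - x p.1) else 1)
        = ∏ p : Σ i : Fin n, Fin (α i), ∏ j : Fin n, ∏ b : Fin (α j),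
            (if ((p.1 : ℕ) < (j : ℕ)) then (x j - x p.1) else 1) := by
          refine Finset.prod_congr rfl fun p _ => ?_
          rw [← Finset.univ_sigma_univ, Finset.prod_sigma]
    _ = ∏ p : Σ i : Fin n, Fin (α i), ∏ j : Fin n,
            (if ((p.1 : ℕ) < (j : ℕ)) then (x j - x p.1) else 1) ^ (α j) := by
          refine Finset.prod_congr rfl fun p _ => Finset.prod_congr rfl fun j _ => ?_
          rw [Finset.prod_const, Finset.card_univ, Fintype.card_fin]
    _ = ∏ i : Fin n, ∏ a : Fin (α i), ∏ j : Fin n,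
            (if ((i : ℕ) < (j : ℕ)) then (x j - x i) else 1) ^ (α j) := by
          rw [← Finset.univ_sigma_univ, Finset.prod_sigma]
    _ = ∏ i : Fin n, ∏ j : Fin n,
            ((if ((i : ℕ) < (j : ℕ)) then (x j - x i) else 1) ^ (α j)) ^ (α i) := by
          refine Finset.prod_congr rfl fun i _ => ?_
          rw [Finset.prod_const, Finset.card_univ, Fintype.card_fin, ← Finset.prod_pow]
    _ = ∏ i : Fin n, ∏ j : Fin n,
            (if i < j then (x j - x i) ^ (α i * α j) else 1) := by
          refine Finset.prod_congr rfl fun i _ => Finset.prod_congr rfl fun j _ => ?_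
          rw [← pow_mul]
          by_cases h : (i : ℕ) < (j : ℕ)
          · rw [if_pos h, if_pos (Fin.lt_def.mpr h), mul_comm (α j) (α i)]
          · rw [if_neg h, if_neg (fun hh => h (Fin.lt_def.mp hh)), one_pow]
    _ = ∏ p ∈ Finset.univ.filter (fun p : Fin n × Fin n => p.1 < p.2),
          (x p.2 - x p.1) ^ (α p.1 * α p.2) := by
          rw [Finset.prod_filter, Fintype.prod_prod_type]
end

section
/- Let f(t) be a formal power series over a commutative ring with f(0) = 1. Fix integers α₁,…,αₙ ≥ 1 with m = Σαᵢ, and elements x₁,…,xₙ. Let M(α, m, x) be the α×m matrix with (i,j)-entry equal to the coefficient of t^{j−i} in f(t)/(1−tx)^i. Then the determinant of the m×m matrix obtained by stacking the blocks M(α₁,m,x₁),…,M(αₙ,m,xₙ) equals ∏_{i<j} (xⱼ − xᵢ)^{αᵢ·αⱼ}. -/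
open Polynomial Finset

private lemma psv_aux_sum_choose (k l : ℕ) :
    ∑ p ∈ range (l + 1), (p + k).choose k = (l + (k + 1)).choose (k + 1) := by
  induction l with
  | zero => simp
  | succ l ih =>
    rw [Finset.sum_range_succ, ih]
    have h1 : l + 1 + (k + 1) = (l + (k + 1)) + 1 := by omega
    rw [h1, Nat.choose_succ_succ]
    have h2 : l + (k + 1) = l + 1 + k := by omega
    rw [h2, Nat.add_comm]

private lemma psv_geom_pow_coeff {R : Type*} [CommRing R] (a : R) (k l : ℕ) :
    (PowerSeries.coeff l) ((PowerSeries.mk fun d => a ^ d) ^ (k + 1)) =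
      ((l + k).choose k : R) * a ^ l := by
  induction k generalizing l with
  | zero => simp [PowerSeries.coeff_mk]
  | succ k ih =>
    rw [pow_succ, PowerSeries.coeff_mul, Finset.Nat.sum_antidiagonal_eq_sum_range_succ_mk]
    have h : ∀ p ∈ range (l + 1),
        (PowerSeries.coeff p) ((PowerSeries.mk fun d => a ^ d) ^ (k + 1)) *
          (PowerSeries.coeff (l - p)) (PowerSeries.mk fun d => a ^ d)
        = (((p + k).choose k : ℕ) : R) * a ^ l := by
      intro p hp
      rw [ih, PowerSeries.coeff_mk, mul_assoc, ← pow_add]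
      congr 2
      rw [Finset.mem_range] at hp
      omega
    rw [Finset.sum_congr rfl h, ← Finset.sum_mul, ← Nat.cast_sum, psv_aux_sum_choose]

private lemma psv_taylor_pow {R : Type*} [CommRing R] (c : R) (p : R[X]) (u : ℕ) :
    taylor c (p ^ u) = (taylor c p) ^ u := by
  induction u with
  | zero => simp
  | succ u ih => rw [pow_succ, pow_succ, taylor_mul, ih]

private lemma psv_taylor_prod {R : Type*} [CommRing R] (c : R) {ι : Type*} (s : Finset ι)
    (p : ι → R[X]) : taylor c (∏ i ∈ s, p i) = ∏ i ∈ s, taylor c (p i) := by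
  classical
  induction s using Finset.induction with
  | empty => simp
  | @insert a s h ih => rw [Finset.prod_insert h, Finset.prod_insert h, taylor_mul, ih]

private lemma psv_taylor_coeff_sum {R : Type*} [CommRing R] {m : ℕ} (p : R[X])
    (hp : p.natDegree < m) (c : R) (k : ℕ) :
    ∑ d : Fin m, ((d : ℕ).choose k : R) * c ^ ((d : ℕ) - k) * p.coeff d =
      (taylor c p).coeff k := by
  rw [taylor_coeff, hasseDeriv_apply,
    Polynomial.sum_over_range' p (fun n => by simp) m hp, Polynomial.eval_finset_sum]
  rw [Fin.sum_univ_eq_sum_range fun d => ((d : ℕ).choose k : R) * c ^ (d - k) * p.coeff d]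
  refine Finset.sum_congr rfl fun d _ => ?_
  rw [eval_monomial]
  ring

private lemma psv_det_V {R : Type*} [CommRing R] {n m : ℕ} (x : Fin n → R) (α : Fin n → ℕ)
    (I : Fin m → Fin n) (P : Fin m → ℕ)
    (hP : ∀ r, P r < α (I r))
    (hdeg : ∀ r : Fin m, (r : ℕ) = P r + ∑ k ∈ Finset.Iio (I r), α k)
    (hrel : ∀ r s : Fin m, r < s → I r < I s ∨ (I r = I s ∧ P r < P s)) :
    (Matrix.of fun r s : Fin m =>
        (((s : ℕ).choose (P r) : R) * x (I r) ^ ((s : ℕ) - P r))).det =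
      ∏ r : Fin m, ∏ k ∈ Finset.Iio (I r), (x (I r) - x k) ^ α k := by
  classical
  nontriviality R
  set q : Fin m → R[X] := fun s => (X - C (x (I s))) ^ (P s) *
    ∏ k ∈ Finset.Iio (I s), (X - C (x k)) ^ α k with hq
  have hmonic : ∀ s, (q s).Monic := fun s =>
    ((monic_X_sub_C (x (I s))).pow _).mul
      (monic_prod_of_monic _ _ fun k _ => (monic_X_sub_C (x k)).pow _)
  have hdegq : ∀ s, (q s).natDegree = (s : ℕ) := by
    intro s
    rw [hq]
    rw [Polynomial.Monic.natDegree_mul ((monic_X_sub_C (x (I s))).pow _)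
      (monic_prod_of_monic _ _ fun k _ => (monic_X_sub_C (x k)).pow _),
      Polynomial.Monic.natDegree_pow (monic_X_sub_C _), Polynomial.natDegree_X_sub_C, mul_one,
      Polynomial.natDegree_prod_of_monic _ _ fun k _ => (monic_X_sub_C (x k)).pow _]
    have hx : ∀ k ∈ Finset.Iio (I s), ((X - C (x k)) ^ α k).natDegree = α k := fun k _ => by
      rw [Polynomial.Monic.natDegree_pow (monic_X_sub_C _), Polynomial.natDegree_X_sub_C, mul_one]
    rw [Finset.sum_congr rfl hx]
    exact (hdeg s).symm
  set V : Matrix (Fin m) (Fin m) R := Matrix.of fun r s : Fin m =>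
      (((s : ℕ).choose (P r) : R) * x (I r) ^ ((s : ℕ) - P r)) with hV
  set B : Matrix (Fin m) (Fin m) R := Matrix.of fun c s => (q s).coeff c with hB
  have hBtri : B.BlockTriangular id := by
    intro c s h
    simp only [hB, Matrix.of_apply]
    exact Polynomial.coeff_eq_zero_of_natDegree_lt (by rw [hdegq]; exact_mod_cast h)
  have hBdet : B.det = 1 := by
    rw [Matrix.det_of_upperTriangular hBtri]
    refine Finset.prod_eq_one fun s _ => ?_
    simp only [hB, Matrix.of_apply]
    have := (hmonic s).coeff_natDegree
    rwa [hdegq] at this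
  have htay : ∀ r s : Fin m, taylor (x (I r)) (q s) =
      (X + C (x (I r) - x (I s))) ^ (P s) *
        ∏ k ∈ Finset.Iio (I s), (X + C (x (I r) - x k)) ^ α k := by
    intro r s
    rw [hq]
    rw [taylor_mul, psv_taylor_pow, psv_taylor_prod]
    have h1 : ∀ b : R, taylor (x (I r)) (X - C b) = X + C (x (I r) - b) := by
      intro b
      rw [map_sub, taylor_X, taylor_C, C_sub]
      ring
    rw [h1]
    congr 1
    refine Finset.prod_congr rfl fun k _ => ?_
    rw [psv_taylor_pow, h1]
  have hVB : V * B = Matrix.of fun r s => (taylor (x (I r)) (q s)).coeff (P r) := by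
    ext r s
    rw [Matrix.mul_apply]
    simp only [hV, hB, Matrix.of_apply]
    exact psv_taylor_coeff_sum (q s) (by rw [hdegq]; exact s.isLt) _ _
  have hVBtri : (V * B).BlockTriangular OrderDual.toDual := by
    intro r s hrs
    rw [hVB]
    simp only [Matrix.of_apply]
    rcases hrel r s hrs with h | ⟨h1, h2⟩
    · have hmem : I r ∈ Finset.Iio (I s) := Finset.mem_Iio.mpr h
      have hfac : X ^ α (I r) ∣ taylor (x (I r)) (q s) := by
        rw [htay r s]
        refine Dvd.dvd.mul_left ?_ _
        have hd := Finset.dvd_prod_of_mem (fun k => (X + C (x (I r) - x k)) ^ α k) hmem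
        simp only [sub_self, C_0, add_zero] at hd
        exact hd
      exact (Polynomial.X_pow_dvd_iff.mp hfac) _ (hP r)
    · have hfac : X ^ P s ∣ taylor (x (I r)) (q s) := by
        rw [htay r s, h1, sub_self, C_0, add_zero]
        exact dvd_mul_right _ _
      exact (Polynomial.X_pow_dvd_iff.mp hfac) _ h2
  have hdiag : ∀ r : Fin m, (V * B) r r = ∏ k ∈ Finset.Iio (I r), (x (I r) - x k) ^ α k := by
    intro r
    rw [hVB]
    simp only [Matrix.of_apply]
    rw [htay r r, sub_self, C_0, add_zero]
    have h0 := Polynomial.coeff_X_pow_mul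
      (∏ k ∈ Finset.Iio (I r), (X + C (x (I r) - x k)) ^ α k) (P r) 0
    rw [zero_add] at h0
    rw [h0, Polynomial.coeff_zero_eq_eval_zero, Polynomial.eval_prod]
    refine Finset.prod_congr rfl fun k _ => ?_
    rw [Polynomial.eval_pow, Polynomial.eval_add, Polynomial.eval_X, Polynomial.eval_C, zero_add]
  have hchain : V.det = (V * B).det := by rw [Matrix.det_mul, hBdet, mul_one]
  rw [show (Matrix.of fun r s : Fin m =>
      (((s : ℕ).choose (P r) : R) * x (I r) ^ ((s : ℕ) - P r))).det = V.det from rfl, hchain,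
    Matrix.det_of_lowerTriangular _ hVBtri]
  exact Finset.prod_congr rfl fun r _ => hdiag r

private lemma psv_M_eq_VT {R : Type*} [CommRing R] {n m : ℕ} (f : PowerSeries R) (x : Fin n → R)
    (I : Fin m → Fin n) (P : Fin m → ℕ) :
    (Matrix.of fun r s : Fin m =>
        if P r ≤ (s : ℕ) then
          PowerSeries.coeff ((s : ℕ) - P r)
            (f * (PowerSeries.mk fun d => x (I r) ^ d) ^ (P r + 1))
        else 0) =
      (Matrix.of fun r s : Fin m =>
        (((s : ℕ).choose (P r) : R) * x (I r) ^ ((s : ℕ) - P r))) *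
      (Matrix.of fun c s : Fin m =>
        if (c : ℕ) ≤ (s : ℕ) then PowerSeries.coeff ((s : ℕ) - (c : ℕ)) f else 0) := by
  ext r s
  rw [Matrix.mul_apply]
  simp only [Matrix.of_apply]
  rw [Fin.sum_univ_eq_sum_range (fun c => ((c.choose (P r) : R) * x (I r) ^ (c - P r)) *
    (if c ≤ (s : ℕ) then PowerSeries.coeff ((s : ℕ) - c) f else 0))]
  have hsub : Finset.Icc (P r) (s : ℕ) ⊆ Finset.range m := by
    intro c hc
    rw [Finset.mem_Icc] at hc
    rw [Finset.mem_range]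
    have := s.isLt
    omega
  have hvan : ∀ c ∈ Finset.range m, c ∉ Finset.Icc (P r) (s : ℕ) →
      ((c.choose (P r) : R) * x (I r) ^ (c - P r)) *
        (if c ≤ (s : ℕ) then PowerSeries.coeff ((s : ℕ) - c) f else 0) = 0 := by
    intro c _ hc
    rw [Finset.mem_Icc] at hc
    by_cases h1 : c ≤ (s : ℕ)
    · have h2 : c < P r := by omega
      rw [Nat.choose_eq_zero_of_lt h2]
      simp
    · rw [if_neg h1, mul_zero]
  rw [← Finset.sum_subset hsub hvan]
  by_cases h : P r ≤ (s : ℕ)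
  · rw [if_pos h, PowerSeries.coeff_mul, Finset.Nat.sum_antidiagonal_eq_sum_range_succ_mk]
    refine Finset.sum_bij' (fun a _ => (s : ℕ) - a) (fun c _ => (s : ℕ) - c) ?_ ?_ ?_ ?_ ?_
    · intro a ha
      rw [Finset.mem_range] at ha
      rw [Finset.mem_Icc]
      omega
    · intro c hc
      rw [Finset.mem_Icc] at hc
      rw [Finset.mem_range]
      omega
    · intro a ha
      rw [Finset.mem_range] at ha
      omega
    · intro c hc
      rw [Finset.mem_Icc] at hc
      omega
    · intro a ha
      dsimp only
      rw [Finset.mem_range] at ha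
      rw [psv_geom_pow_coeff]
      have h1 : (s : ℕ) - a ≤ (s : ℕ) := by omega
      rw [if_pos h1]
      have h2 : (s : ℕ) - ((s : ℕ) - a) = a := by omega
      have h3 : (s : ℕ) - P r - a + P r = (s : ℕ) - a := by omega
      have h4 : (s : ℕ) - a - P r = (s : ℕ) - P r - a := by omega
      rw [h2, h3, h4]
      ring
  · rw [if_neg h, Finset.Icc_eq_empty (by omega), Finset.sum_empty]

set_option maxHeartbeats 1000000 in
/-- Appendix theorem: for a formal power series `f` with `f(0) = 1` and `αᵢ ≥ 1`,
the `m×m` block matrix whose block for `xᵢ` has `(r,s)`-entry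
`[t^{s−r}] f(t)/(1−t·xᵢ)^r` (1-based; coefficients of negative powers are `0`,
and `1/(1−t·xᵢ)` is the geometric series `∑ xᵢ^d t^d`), with rows ordered block
by block, has determinant `∏_{i<j} (xⱼ − xᵢ)^{αᵢαⱼ}`. -/
theorem power_series_vandermonde {R : Type*} [CommRing R] {n : ℕ}
    (f : PowerSeries R) (hf : PowerSeries.constantCoeff f = 1)
    (α : Fin n → ℕ) (hα : ∀ i, 1 ≤ α i) (m : ℕ) (hm : m = ∑ i, α i) (x : Fin n → R)
    (e : (Σ i : Fin n, Fin (α i)) ≃ Fin m)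
    (he : ∀ a b : Σ i : Fin n, Fin (α i),
      ((a.1 : ℕ) < b.1 ∨ ((a.1 : ℕ) = b.1 ∧ (a.2 : ℕ) < (b.2 : ℕ))) → e a < e b) :
    (Matrix.of fun r s : Fin m =>
        if ((e.symm r).2 : ℕ) ≤ (s : ℕ) then
          PowerSeries.coeff ((s : ℕ) - ((e.symm r).2 : ℕ))
            (f * (PowerSeries.mk fun d => x (e.symm r).1 ^ d) ^ (((e.symm r).2 : ℕ) + 1))
        else 0).det =
      ∏ p ∈ Finset.univ.filter (fun p : Fin n × Fin n => p.1 < p.2),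
        (x p.2 - x p.1) ^ (α p.1 * α p.2) := by
  classical
  -- ordering facts
  have trich : ∀ a b : Σ i : Fin n, Fin (α i), a ≠ b →
      (((a.1 : ℕ) < b.1 ∨ ((a.1 : ℕ) = b.1 ∧ (a.2 : ℕ) < (b.2 : ℕ))) ∨
       ((b.1 : ℕ) < a.1 ∨ ((b.1 : ℕ) = a.1 ∧ (b.2 : ℕ) < (a.2 : ℕ)))) := by
    rintro ⟨a1, a2⟩ ⟨b1, b2⟩ hne
    rcases lt_trichotomy (a1 : ℕ) (b1 : ℕ) with h | h | h
    · exact Or.inl (Or.inl h)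
    · have hab : a1 = b1 := Fin.ext h
      subst hab
      rcases lt_trichotomy (a2 : ℕ) (b2 : ℕ) with h2 | h2 | h2
      · exact Or.inl (Or.inr ⟨rfl, h2⟩)
      · exact absurd (congrArg (Sigma.mk a1) (Fin.ext h2)) hne
      · exact Or.inr (Or.inr ⟨rfl, h2⟩)
    · exact Or.inr (Or.inl h)
  have hrel' : ∀ r s : Fin m, r < s →
      (((e.symm r).1 : ℕ) < (e.symm s).1 ∨
        (((e.symm r).1 : ℕ) = (e.symm s).1 ∧ ((e.symm r).2 : ℕ) < ((e.symm s).2 : ℕ))) := by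
    intro r s hrs
    have hne : e.symm r ≠ e.symm s := fun hEq => absurd (e.symm.injective hEq) hrs.ne
    rcases trich _ _ hne with h | h
    · exact h
    · exfalso
      have := he _ _ h
      rw [Equiv.apply_symm_apply, Equiv.apply_symm_apply] at this
      exact absurd hrs (asymm this)
  -- rank formula
  have hcard : ∀ a : Σ i : Fin n, Fin (α i), (∑ k ∈ Finset.Iio a.1, α k) + (a.2 : ℕ) < m := by
    rintro ⟨j, u⟩
    have h1 : (∑ k ∈ Finset.Iio j, α k) + α j = ∑ k ∈ Finset.Iic j, α k := by
      rw [← Finset.Iio_insert, Finset.sum_insert (by simp), Nat.add_comm]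
    have h2 : ∑ k ∈ Finset.Iic j, α k ≤ ∑ k, α k :=
      Finset.sum_le_sum_of_subset (Finset.subset_univ _)
    have h3 := u.isLt
    simp only
    omega
  set E2 : (Σ i : Fin n, Fin (α i)) → Fin m :=
    fun a => ⟨(∑ k ∈ Finset.Iio a.1, α k) + (a.2 : ℕ), hcard a⟩ with hE2
  have hE2mono : ∀ a b : Σ i : Fin n, Fin (α i),
      ((a.1 : ℕ) < b.1 ∨ ((a.1 : ℕ) = b.1 ∧ (a.2 : ℕ) < (b.2 : ℕ))) → E2 a < E2 b := by
    rintro ⟨a1, a2⟩ ⟨b1, b2⟩ (h | ⟨h1, h2⟩)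
    · have hlt : a1 < b1 := by exact_mod_cast h
      have hsub : Finset.Iic a1 ⊆ Finset.Iio b1 := fun k hk =>
        Finset.mem_Iio.mpr (lt_of_le_of_lt (Finset.mem_Iic.mp hk) hlt)
      have hle : (∑ k ∈ Finset.Iio a1, α k) + α a1 ≤ ∑ k ∈ Finset.Iio b1, α k := by
        rw [show (∑ k ∈ Finset.Iio a1, α k) + α a1 = ∑ k ∈ Finset.Iic a1, α k by
          rw [← Finset.Iio_insert, Finset.sum_insert (by simp), Nat.add_comm]]
        exact Finset.sum_le_sum_of_subset hsub
      have ha2 := a2.isLt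
      simp only [hE2, Fin.mk_lt_mk]
      omega
    · have hab : a1 = b1 := Fin.ext h1
      subst hab
      have h2' : (a2 : ℕ) < (b2 : ℕ) := h2
      simp only [hE2, Fin.mk_lt_mk]
      omega
  have hE2inj : Function.Injective E2 := by
    intro a b hab
    by_contra hne
    rcases trich a b hne with h | h
    · exact absurd hab (hE2mono a b h).ne
    · exact absurd hab.symm (hE2mono b a h).ne
  have hE2bij : Function.Bijective E2 :=
    (Fintype.bijective_iff_injective_and_card E2).mpr
      ⟨hE2inj, by simp [Fintype.card_sigma, hm]⟩
  have hgmono : StrictMono (fun r : Fin m => E2 (e.symm r)) :=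
    fun r s hrs => hE2mono _ _ (hrel' r s hrs)
  have hgid : (fun r : Fin m => E2 (e.symm r)) = id := by
    refine (hgmono.range_inj strictMono_id).mp ?_
    rw [Set.range_id, Set.range_eq_univ]
    exact hE2bij.2.comp e.symm.surjective
  have hrank : ∀ r : Fin m,
      (r : ℕ) = ((e.symm r).2 : ℕ) + ∑ k ∈ Finset.Iio (e.symm r).1, α k := by
    intro r
    have h1 := congrFun hgid r
    have h2 : ((E2 (e.symm r)) : ℕ) = (r : ℕ) := by rw [h1]; rfl
    simp only [hE2] at h2
    omega
  -- factor M = V * T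
  rw [psv_M_eq_VT f x (fun r => (e.symm r).1) (fun r => ((e.symm r).2 : ℕ)), Matrix.det_mul]
  -- det T = 1
  have hTdet : (Matrix.of fun c s : Fin m =>
      if (c : ℕ) ≤ (s : ℕ) then PowerSeries.coeff ((s : ℕ) - (c : ℕ)) f else 0).det = 1 := by
    rw [Matrix.det_of_upperTriangular (by
      intro c s hcs
      have : (s : ℕ) < (c : ℕ) := hcs
      simp only [Matrix.of_apply]
      rw [if_neg (by omega)])]
    refine Finset.prod_eq_one fun c _ => ?_
    simp only [Matrix.of_apply, le_refl, if_true, Nat.sub_self]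
    rw [PowerSeries.coeff_zero_eq_constantCoeff, hf]
  rw [hTdet, mul_one]
  -- det V
  rw [psv_det_V x α (fun r => (e.symm r).1) (fun r => ((e.symm r).2 : ℕ))
    (fun r => (e.symm r).2.isLt) hrank
    (by
      intro r s hrs
      rcases hrel' r s hrs with h | ⟨h1, h2⟩
      · exact Or.inl (by exact_mod_cast h)
      · exact Or.inr ⟨Fin.ext h1, h2⟩)]
  -- reindex the product
  have hprod := Equiv.prod_comp e.symm
    (fun a : Σ i : Fin n, Fin (α i) => ∏ k ∈ Finset.Iio a.1, (x a.1 - x k) ^ α k)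
  rw [hprod]
  rw [← Finset.univ_sigma_univ, Finset.prod_sigma]
  have hfib : ∀ j : Fin n,
      (∏ _u : Fin (α j), ∏ k ∈ Finset.Iio j, (x j - x k) ^ α k) =
        ∏ k ∈ Finset.Iio j, (x j - x k) ^ (α k * α j) := by
    intro j
    rw [Finset.prod_const, Finset.card_univ, Fintype.card_fin, ← Finset.prod_pow]
    exact Finset.prod_congr rfl fun k _ => by rw [← pow_mul]
  rw [Finset.prod_congr rfl fun j _ => hfib j]
  -- now match with the filtered product over pairs
  conv_rhs => rw [Finset.prod_filter, Fintype.prod_prod_type, Finset.prod_comm]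
  refine Finset.prod_congr rfl fun j _ => ?_
  have hIio : Finset.univ.filter (fun a : Fin n => a < j) = Finset.Iio j := by
    ext a
    simp
  rw [← hIio, Finset.prod_filter]
end
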